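/- Let p be a prime, K a field of characteristic p, D a derivation on K, and a ∈ K. Then, as F_p-linear endomorphisms of K, (D + m_a)^p = D^p + m_{a^p + D^{p-1}(a)}; equivalently, for every g ∈ K, applying the p-th iterate of the map g ↦ D(g) + a·g to g yields D^p(g) + (a^p + D^{p-1}(a))·g. -/

import Mathlib

open Polynomial Finset

/-- Binomial coefficients `C(p-1, k)` are `(-1)^k` mod `p`. -/
lemma jac_choose_cast {R : Type*} [Ring R] (p : ℕ) (hp : p.Prime) [CharP R p]
    {k : ℕ} (hk : k ≤ p - 1) : (((p - 1).choose k : ℕ) : R) = (-1) ^ k := by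
  induction k with
  | zero => simp
  | succ n ih =>
    have hp2 := hp.two_le
    have hn : n ≤ p - 1 := by omega
    have hlt : n + 1 < p := by omega
    have hpascal : (p - 1).choose n + (p - 1).choose (n + 1) = p.choose (n + 1) := by
      have : p = (p - 1) + 1 := by omega
      rw [this, Nat.choose_succ_succ]
      simp
    have hdvd : p ∣ p.choose (n + 1) := hp.dvd_choose_self (by omega) hlt
    have h0 : (((p - 1).choose n : ℕ) : R) + (((p - 1).choose (n + 1) : ℕ) : R) = 0 := by
      rw [← Nat.cast_add, hpascal]
      exact (CharP.cast_eq_zero_iff R p _).2 hdvd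
    rw [ih hn] at h0
    have : (((p - 1).choose (n + 1) : ℕ) : R) = -((-1) ^ n) :=
      neg_eq_of_add_eq_zero_right h0 |>.symm
    rw [this, pow_succ, mul_neg_one]


lemma jac_end_sum_apply {M : Type*} [AddCommMonoid M] {ι : Type*} (s : Finset ι)
    (f : ι → AddMonoid.End M) (w : M) : (∑ i ∈ s, f i) w = ∑ i ∈ s, f i w := by
  classical
  induction s using Finset.induction_on with
  | empty => simp [AddMonoid.End.zero_apply]
  | insert _ _ h ih =>
    rw [Finset.sum_insert h, Finset.sum_insert h, ← ih]
    rfl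

/-- Jacobson/Hochschild formula in an abstract ring of characteristic `p`. -/
lemma jacobson_ring (p : ℕ) (hp : p.Prime) (R : Type*) [Ring R] [CharP R p]
    (x y : R) (u : ℕ → R) (hu0 : u 0 = x)
    (hsucc : ∀ k, u (k + 1) = y * u k - u k * y)
    (hcomm : ∀ k, x * u k = u k * x) :
    (x + y) ^ p = x ^ p + y ^ p + u (p - 1) := by
  have hp2 := hp.two_le
  haveI : CharP R[X] p := by
    constructor
    intro n
    rw [← CharP.cast_eq_zero_iff R p n]
    constructor
    · intro h
      have := congrArg (fun q => coeff q 0) h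
      simpa using this
    · intro h
      have : ((n : R[X])) = C ((n : R)) := by simp
      rw [this, h, map_zero]
  set z : R[X] := C x * X + C y with hz
  -- the left/right multiplication endomorphisms
  set L : AddMonoid.End R[X] := AddMonoid.End.mulLeft z with hL
  set Rr : AddMonoid.End R[X] := AddMonoid.End.mulRight z with hRr
  have hLapp : ∀ w, L w = z * w := fun _ => rfl
  have hRapp : ∀ w, Rr w = w * z := fun _ => rfl
  have hLR : Commute L Rr := by
    apply AddMonoidHom.ext
    intro w
    show z * (w * z) = (z * w) * z
    rw [mul_assoc]
  have hLpow : ∀ n w, (L ^ n) w = z ^ n * w := by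
    intro n
    induction n with
    | zero => intro w; simp [AddMonoid.End.one_apply]
    | succ n ih =>
      intro w
      rw [pow_succ']
      show L ((L ^ n) w) = _
      rw [ih, hLapp, pow_succ', mul_assoc]
  have hNegRpow : ∀ n w, ((-Rr) ^ n) w = (-1 : R[X]) ^ n * (w * z ^ n) := by
    intro n
    induction n with
    | zero => intro w; simp [AddMonoid.End.one_apply]
    | succ n ih =>
      intro w
      rw [pow_succ']
      show (-Rr) (((-Rr) ^ n) w) = _
      rw [ih]
      show -(((-1 : R[X]) ^ n * (w * z ^ n)) * z) = _
      rw [pow_succ, pow_succ]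
      noncomm_ring
  -- iterated bracket with z on C x
  have hAd : ∀ k, ((L - Rr) ^ k) (C x) = C (u k) := by
    intro k
    induction k with
    | zero => simpa [AddMonoid.End.one_apply] using congrArg C hu0.symm
    | succ k ih =>
      rw [pow_succ']
      show (L - Rr) (((L - Rr) ^ k) (C x)) = _
      rw [ih]
      show z * C (u k) - C (u k) * z = _
      rw [hz, hsucc k]
      have h1 : (C x * X) * C (u k) = C (u k) * (C x * X) := by
        rw [mul_assoc, X_mul_C, ← mul_assoc, ← C_mul, hcomm k, C_mul, mul_assoc]
      have h2 : C (y * u k - u k * y) = C y * C (u k) - C (u k) * C y := by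
        rw [map_sub, C_mul, C_mul]
      rw [h2, add_mul, mul_add, h1]
      noncomm_ring
  -- (-1)^(p-1) = 1 in char p
  have hneg1 : ((-1 : R[X])) ^ (p - 1) = 1 := by
    rcases hp.eq_two_or_odd' with hp2' | hodd
    · subst hp2'
      have h2 : ((2 : ℕ) : R[X]) = 0 := (CharP.cast_eq_zero_iff R[X] 2 2).2 dvd_rfl
      have hneg : (-1 : R[X]) = 1 := by
        rw [neg_eq_iff_add_eq_zero]
        rw [Nat.cast_ofNat] at h2
        rw [← one_add_one_eq_two] at h2
        exact h2
      simp [hneg]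
    · have heven : Even (p - 1) := Nat.Odd.sub_odd hodd odd_one
      exact heven.neg_one_pow
  -- the conjugation sum equals the iterated bracket
  have hsum : ∀ w : R[X], ∑ i ∈ range p, z ^ i * w * z ^ (p - 1 - i)
      = ((L - Rr) ^ (p - 1)) w := by
    intro w
    have hc : Commute L (-Rr) := hLR.neg_right
    have hpow := hc.add_pow (p - 1)
    have hrange : p - 1 + 1 = p := by omega
    rw [hrange] at hpow
    have hterm : ∀ m ∈ range p,
        (L ^ m * (-Rr) ^ (p - 1 - m) * (((p - 1).choose m : ℕ) : AddMonoid.End R[X])) w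
        = z ^ m * w * z ^ (p - 1 - m) := by
      intro m hm
      have hm' : m ≤ p - 1 := by
        have := Finset.mem_range.1 hm; omega
      have hcast : ((((p - 1).choose m : ℕ) : AddMonoid.End R[X])) w
          = ((((p - 1).choose m : ℕ) : R[X])) * w := by
        rw [AddMonoid.End.natCast_apply, nsmul_eq_mul]
      show (L ^ m) (((-Rr) ^ (p - 1 - m)) (((((p - 1).choose m : ℕ) : AddMonoid.End R[X])) w)) = _
      rw [hcast, jac_choose_cast p hp hm', hNegRpow, hLpow]
      have hcomb : ((-1 : R[X])) ^ (p - 1 - m) * ((-1 : R[X])) ^ m = 1 := by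
        rw [← pow_add]
        have h3 : p - 1 - m + m = p - 1 := by omega
        rw [h3, hneg1]
      rw [← mul_assoc ((-1 : R[X]) ^ (p - 1 - m)), ← mul_assoc ((-1 : R[X]) ^ (p - 1 - m)),
        hcomb, one_mul, ← mul_assoc]
    calc ∑ i ∈ range p, z ^ i * w * z ^ (p - 1 - i)
        = ∑ m ∈ range p,
            (L ^ m * (-Rr) ^ (p - 1 - m) * (((p - 1).choose m : ℕ) : AddMonoid.End R[X])) w :=
          (Finset.sum_congr rfl hterm).symm
      _ = ((∑ m ∈ range p,
            L ^ m * (-Rr) ^ (p - 1 - m) * (((p - 1).choose m : ℕ) : AddMonoid.End R[X]))) w :=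
          (jac_end_sum_apply _ _ _).symm
      _ = ((L + -Rr) ^ (p - 1)) w := by rw [← hpow]
      _ = ((L - Rr) ^ (p - 1)) w := by rw [sub_eq_add_neg]
  -- derivative of powers of z
  have hzder : derivative z = C x := by
    rw [hz]
    simp [derivative_mul]
  have hder : ∀ n, derivative (z ^ n) = ∑ i ∈ range n, z ^ i * C x * z ^ (n - 1 - i) := by
    intro n
    induction n with
    | zero => simp
    | succ n ih =>
      rw [pow_succ', derivative_mul, hzder, ih, Finset.mul_sum, Finset.sum_range_succ']
      simp only [pow_zero, one_mul, Nat.add_sub_cancel, Nat.sub_zero]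
      rw [add_comm]
      congr 1
      · apply Finset.sum_congr rfl
        intro i _
        have h4 : n - (i + 1) = n - 1 - i := by omega
        rw [h4, pow_succ']
        noncomm_ring
  have hderp : derivative (z ^ p) = C (u (p - 1)) := by
    rw [hder p, hsum (C x), hAd]
  -- coefficients of z
  have hcz0 : z.coeff 0 = y := by simp [hz]
  have hcz1 : z.coeff 1 = x := by simp [hz]
  have hczk : ∀ k, 2 ≤ k → z.coeff k = 0 := by
    intro k hk
    have h1 : (C x * X).coeff k = 0 := by
      rw [coeff_C_mul, coeff_X, if_neg (by omega : ¬ 1 = k), mul_zero]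
    have h2 : (C y).coeff k = 0 := by
      rw [coeff_C, if_neg (by omega : ¬ k = 0)]
    rw [hz, coeff_add, h1, h2, add_zero]
  -- degree bound
  have hdegz : z.natDegree ≤ 1 := by
    apply le_trans (natDegree_add_le _ _)
    simp only [max_le_iff]
    constructor
    · exact le_trans (natDegree_C_mul_le _ _) natDegree_X_le
    · exact le_trans (natDegree_C _).le (by omega)
  have hcoeff_hi : ∀ n k, n < k → (z ^ n).coeff k = 0 := by
    intro n k hk
    apply coeff_eq_zero_of_natDegree_lt
    calc (z ^ n).natDegree ≤ n * z.natDegree := natDegree_pow_le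
      _ ≤ n * 1 := by exact Nat.mul_le_mul_left n hdegz
      _ < k := by omega
  -- bottom coefficient
  have hcoeff0 : ∀ n, (z ^ n).coeff 0 = y ^ n := by
    intro n
    induction n with
    | zero => simp
    | succ n ih => rw [pow_succ, mul_coeff_zero, ih, hcz0, pow_succ]
  -- top coefficient
  have hcoefftop : ∀ n, (z ^ n).coeff n = x ^ n := by
    intro n
    induction n with
    | zero => simp
    | succ n ih =>
      rw [pow_succ', coeff_mul]
      rw [Finset.sum_eq_single (1, n)]
      · rw [hcz1, ih, pow_succ']
      · rintro ⟨i, j⟩ hmem hne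
        rw [Finset.HasAntidiagonal.mem_antidiagonal] at hmem
        rcases Nat.lt_or_ge i 2 with hi | hi
        · interval_cases i
          · have : j = n + 1 := by omega
            subst this
            rw [hcoeff_hi n (n+1) (by omega), mul_zero]
          · exfalso; apply hne; simp_all; omega
        · rw [hczk i hi, zero_mul]
      · intro hmem
        exfalso
        apply hmem
        rw [Finset.HasAntidiagonal.mem_antidiagonal]
        omega
  -- coefficients from the derivative
  have hderc : ∀ j : ℕ, (z ^ p).coeff (j + 1) * ((j + 1 : ℕ) : R) = (C (u (p - 1))).coeff j := by
    intro j
    rw [← hderp, coeff_derivative]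
    push_cast
    ring_nf
  have hcoeff1 : (z ^ p).coeff 1 = u (p - 1) := by
    have := hderc 0
    simpa using this
  have hcoeffmid : ∀ k, 2 ≤ k → k ≤ p - 1 → (z ^ p).coeff k = 0 := by
    intro k hk2 hkp
    have hk1 : k - 1 + 1 = k := by omega
    have h0 : (z ^ p).coeff k * ((k : ℕ) : R) = 0 := by
      have := hderc (k - 1)
      rw [hk1] at this
      rw [this, coeff_C]
      simp only [if_neg (by omega : ¬ (k - 1 = 0))]
    -- k is invertible mod p
    have hndvd : ¬ p ∣ k := by
      intro hdvd
      rcases hdvd with ⟨c, rfl⟩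
      rcases Nat.eq_zero_or_pos c with rfl | hc
      · omega
      · have : p ≤ p * c := Nat.le_mul_of_pos_right p hc
        omega
    have hcop : Nat.Coprime k p := ((Nat.Prime.coprime_iff_not_dvd hp).2 hndvd).symm
    obtain ⟨m, -, hm⟩ := Nat.exists_mul_mod_eq_one_of_coprime hcop (by omega)
    have hk1R : ((k * m : ℕ) : R) = 1 := by
      rw [CharP.natCast_eq_natCast_mod R p, hm, Nat.cast_one]
    have hfin : (z ^ p).coeff k = ((z ^ p).coeff k * ((k : ℕ) : R)) * ((m : ℕ) : R) := by
      rw [mul_assoc, ← Nat.cast_mul, hk1R, mul_one]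
    rw [hfin, h0, zero_mul]
  -- the polynomial identity
  have hzp : z ^ p = C (x ^ p) * X ^ p + C (u (p - 1)) * X + C (y ^ p) := by
    ext k
    rw [coeff_add, coeff_add, coeff_C_mul, coeff_C_mul, coeff_X_pow, coeff_X, coeff_C]
    by_cases hk0 : k = 0
    · subst hk0
      rw [hcoeff0 p, if_neg (by omega : ¬ (0:ℕ) = p), if_neg (by omega : ¬ (1:ℕ) = 0),
        if_pos rfl, mul_zero, mul_zero, zero_add, zero_add]
    by_cases hk1 : k = 1
    · subst hk1
      rw [hcoeff1, if_neg (by omega : ¬ (1:ℕ) = p), if_pos rfl, if_neg (by omega : ¬ (1:ℕ) = 0),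
        mul_zero, mul_one, zero_add, add_zero]
    by_cases hkp : k = p
    · rw [hkp, hcoefftop p, if_pos rfl, if_neg (by omega : ¬ 1 = p), if_neg (by omega : ¬ p = 0),
        mul_zero, mul_one, add_zero, add_zero]
    by_cases hklt : k < p
    · rw [hcoeffmid k (by omega) (by omega), if_neg (by omega : ¬ k = p),
        if_neg (by omega : ¬ 1 = k), if_neg hk0, mul_zero, mul_zero, add_zero, add_zero]
    · rw [hcoeff_hi p k (by omega), if_neg (by omega : ¬ k = p),
        if_neg (by omega : ¬ 1 = k), if_neg hk0, mul_zero, mul_zero, add_zero, add_zero]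
  -- evaluate at 1
  have hone : ∀ b : R, Commute ((RingHom.id R) b) (1 : R) := fun b => Commute.one_right _
  let φ : R[X] →+* R := eval₂RingHom' (RingHom.id R) 1 hone
  have hφ : ∀ q : R[X], φ q = eval₂ (RingHom.id R) 1 q := fun q => rfl
  have hφz : φ z = x + y := by
    rw [hφ, hz, eval₂_add, eval₂_mul_noncomm, eval₂_C, eval₂_X, eval₂_C]
    · simp
    · intro k
      apply Commute.one_right
  have hmain := congrArg φ hzp
  rw [map_pow, hφz] at hmain
  simp only [map_add, map_mul, map_pow, φ, eval₂RingHom'_apply,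
    eval₂_C, eval₂_X, RingHom.id_apply, one_pow, mul_one] at hmain
  rw [hmain]
  abel



/-- Let `p` be a prime, `K` a field of characteristic `p`, `D` a derivation on `K`
(an additive map satisfying the Leibniz rule), and `a ∈ K`. Then, as maps on `K`,
`(D + m_a)^p = D^p + m_{a^p + D^{p-1}(a)}`: for every `g ∈ K`, the `p`-th iterate of
`g ↦ D(g) + a·g` applied to `g` equals `D^p(g) + (a^p + D^{p-1}(a))·g`. -/
theorem jacobson_formula
    (p : ℕ) (hp : p.Prime) (K : Type*) [Field K] [CharP K p]
    (D : K → K)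
    (hadd : ∀ u v : K, D (u + v) = D u + D v)
    (hleib : ∀ u v : K, D (u * v) = u * D v + v * D u)
    (a : K) :
    ∀ g : K, (fun g : K => D g + a * g)^[p] g
      = D^[p] g + (a ^ p + D^[p - 1] a) * g := by
  intro g
  haveI : CharP (AddMonoid.End K) p := by
    constructor
    intro n
    rw [← CharP.cast_eq_zero_iff K p n]
    constructor
    · intro h
      have h1 := congrArg (fun f : AddMonoid.End K => f 1) h
      simpa [AddMonoid.End.natCast_apply, nsmul_eq_mul] using h1
    · intro h
      refine AddMonoidHom.ext fun t => ?_
      show (n : AddMonoid.End K) t = 0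
      rw [AddMonoid.End.natCast_apply, nsmul_eq_mul, h, zero_mul]
  -- bundled versions
  set Dh : AddMonoid.End K := AddMonoidHom.mk' D hadd with hDh
  set xh : AddMonoid.End K := AddMonoidHom.mulLeft a with hxh
  set u : ℕ → AddMonoid.End K := fun k => AddMonoidHom.mulLeft (D^[k] a) with hu
  have hu0 : u 0 = xh := rfl
  have hsucc : ∀ k, u (k + 1) = Dh * u k - u k * Dh := by
    intro k
    refine AddMonoidHom.ext fun t => ?_
    show D^[k + 1] a * t = D (D^[k] a * t) - D^[k] a * D t
    rw [Function.iterate_succ_apply', hleib]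
    ring
  have hcomm : ∀ k, xh * u k = u k * xh := by
    intro k
    refine AddMonoidHom.ext fun t => ?_
    show a * (D^[k] a * t) = D^[k] a * (a * t)
    ring
  have key := jacobson_ring p hp (AddMonoid.End K) xh Dh u hu0 hsucc hcomm
  have iter : ∀ (f : AddMonoid.End K) (n : ℕ) (t : K), (f ^ n) t = (⇑f)^[n] t := by
    intro f n
    induction n with
    | zero => intro t; rfl
    | succ n ih =>
      intro t
      rw [pow_succ, Function.iterate_succ_apply]
      exact ih (f t)
  have happ := congrArg (fun f : AddMonoid.End K => f g) key
  have h1 : ((xh + Dh) ^ p) g = (fun g : K => D g + a * g)^[p] g := by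
    rw [iter]
    have : ⇑(xh + Dh) = (fun g : K => D g + a * g) := by
      funext t
      show a * t + D t = D t + a * t
      ring
    rw [this]
  have hmul_iter : ∀ (n : ℕ) (t : K), (⇑(AddMonoidHom.mulLeft a : AddMonoid.End K))^[n] t
      = a ^ n * t := by
    intro n
    induction n with
    | zero => intro t; simp
    | succ n ih =>
      intro t
      rw [Function.iterate_succ_apply, ih]
      show a ^ n * (a * t) = a ^ (n + 1) * t
      ring
  have h2 : (xh ^ p) g = a ^ p * g := by
    rw [iter]
    exact hmul_iter p g
  have h3 : (Dh ^ p) g = D^[p] g := iter Dh p g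
  have h4 : (u (p - 1)) g = D^[p - 1] a * g := rfl
  rw [h1] at happ
  rw [happ]
  show (xh ^ p) g + (Dh ^ p) g + (u (p - 1)) g = _
  rw [h2, h3, h4]
  ring
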